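/- Let p_1 ≥ p_2 ≥ … ≥ p_K > p be K + 1 numbers in (0,1) and let Δ_k = p_k − p for 1 ≤ k ≤ K. Then Δ_1 / kl(p, p_1) + Σ_{k=2}^K Δ_k · (1 / kl(p, p_k) − 1 / kl(p, p_{k−1})) ≤ Δ_K · (1 + log(1/Δ_K)) / kl(p, p_K). -/

import Mathlib

/-- The Kullback–Leibler divergence between Bernoulli distributions with means `p`, `q`:
`kl(p, q) = p·log(p/q) + (1−p)·log((1−p)/(1−q))`. -/
noncomputable def klBer (p q : ℝ) : ℝ :=
  p * Real.log (p / q) + (1 - p) * Real.log ((1 - p) / (1 - q))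

lemma klBer_hasDerivAt {p q : ℝ} (hp : p ∈ Set.Ioo (0:ℝ) 1) (hq : q ∈ Set.Ioo (0:ℝ) 1) :
    HasDerivAt (klBer p) (-(p/q) + (1-p)/(1-q)) q := by
  obtain ⟨hp0, hp1⟩ := hp
  obtain ⟨hq0, hq1⟩ := hq
  have hq0' : q ≠ 0 := ne_of_gt hq0
  have hq1' : (1:ℝ) - q ≠ 0 := by linarith
  have h1 : HasDerivAt (fun x : ℝ => p / x) (-(p / q ^ 2)) q := by
    simpa [div_eq_mul_inv] using (hasDerivAt_inv hq0').const_mul p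
  have h2 : HasDerivAt (fun x : ℝ => (1 - p) / (1 - x)) ((1 - p) / (1 - q) ^ 2) q := by
    have hid : HasDerivAt (fun x : ℝ => 1 - x) (-1) q := by
      simpa using (hasDerivAt_id q).const_sub 1
    have := ((hasDerivAt_inv hq1').comp q hid).const_mul (1 - p)
    convert this using 1
    case e'_9 => field_simp
    all_goals rfl
  have hl1 : HasDerivAt (fun x : ℝ => Real.log (p / x)) (-(p / q ^ 2) / (p / q)) q :=
    h1.log (by positivity)
  have hl2 : HasDerivAt (fun x : ℝ => Real.log ((1 - p) / (1 - x)))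
      ((1 - p) / (1 - q) ^ 2 / ((1 - p) / (1 - q))) q :=
    h2.log (div_ne_zero (by linarith) hq1')
  have := (hl1.const_mul p).add (hl2.const_mul (1 - p))
  convert this using 1
  have hp1' : (1:ℝ) - p ≠ 0 := by linarith
  case e'_9 => field_simp
  all_goals rfl

lemma klBer_self {p : ℝ} (hp : p ∈ Set.Ioo (0:ℝ) 1) : klBer p p = 0 := by
  obtain ⟨hp0, hp1⟩ := hp
  have h1 : p / p = 1 := div_self (ne_of_gt hp0)
  have h2 : (1 - p) / (1 - p) = 1 := div_self (by linarith)
  simp [klBer, h1, h2]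

lemma klBer_deriv_eq {p : ℝ} (hp : p ∈ Set.Ioo (0:ℝ) 1) {x : ℝ} (hx : x ∈ Set.Ioo (0:ℝ) 1) :
    deriv (klBer p) x = -(p/x) + (1-p)/(1-x) :=
  (klBer_hasDerivAt hp hx).deriv

lemma klBer_convexOn {p : ℝ} (hp : p ∈ Set.Ioo (0:ℝ) 1) :
    ConvexOn ℝ (Set.Ioo (0:ℝ) 1) (klBer p) := by
  have hdiff : DifferentiableOn ℝ (klBer p) (interior (Set.Ioo (0:ℝ) 1)) := by
    rw [interior_Ioo]
    intro x hx
    exact (klBer_hasDerivAt hp hx).differentiableAt.differentiableWithinAt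
  refine MonotoneOn.convexOn_of_deriv (convex_Ioo 0 1) ?_ hdiff ?_
  · intro x hx
    exact (klBer_hasDerivAt hp hx).differentiableAt.continuousAt.continuousWithinAt
  · rw [interior_Ioo]
    intro x hx y hy hxy
    rw [klBer_deriv_eq hp hx, klBer_deriv_eq hp hy]
    obtain ⟨hp0, hp1⟩ := hp
    obtain ⟨hx0, hx1⟩ := hx
    obtain ⟨hy0, hy1⟩ := hy
    have h1 : p / y ≤ p / x := by
      apply div_le_div_of_nonneg_left (le_of_lt hp0) hx0 hxy
    have h2 : (1 - p) / (1 - x) ≤ (1 - p) / (1 - y) := by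
      apply div_le_div_of_nonneg_left (by linarith) (by linarith) (by linarith)
    linarith

lemma klBer_pos {p x : ℝ} (hp : p ∈ Set.Ioo (0:ℝ) 1) (hx : x ∈ Set.Ioo (0:ℝ) 1)
    (hpx : p < x) : 0 < klBer p x := by
  obtain ⟨hp0, hp1⟩ := hp
  obtain ⟨hx0, hx1⟩ := hx
  have hmono : StrictMonoOn (klBer p) (Set.Ico p 1) := by
    apply strictMonoOn_of_deriv_pos (convex_Ico p 1)
    · intro y hy
      have hy' : y ∈ Set.Ioo (0:ℝ) 1 := ⟨lt_of_lt_of_le hp0 hy.1, hy.2⟩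
      exact (klBer_hasDerivAt ⟨hp0, hp1⟩ hy').differentiableAt.continuousAt.continuousWithinAt
    · rw [interior_Ico]
      intro y hy
      have hy' : y ∈ Set.Ioo (0:ℝ) 1 := ⟨lt_trans hp0 hy.1, hy.2⟩
      obtain ⟨hyp, hy1⟩ := hy
      have hy0 : (0:ℝ) < y := lt_trans hp0 hyp
      have hy0' : y ≠ 0 := ne_of_gt hy0
      have hy1' : (1:ℝ) - y ≠ 0 := by linarith
      rw [klBer_deriv_eq ⟨hp0, hp1⟩ hy']
      have : -(p/y) + (1-p)/(1-y) = (y - p) / (y * (1 - y)) := by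
        field_simp
        ring
      rw [this]
      apply div_pos (by linarith)
      apply mul_pos hy0 (by linarith)
  have := hmono (Set.mem_Ico.2 ⟨le_refl p, hp1⟩) (Set.mem_Ico.2 ⟨le_of_lt hpx, hx1⟩) hpx
  rwa [klBer_self ⟨hp0, hp1⟩] at this

lemma klBer_slope_mono {p a b : ℝ} (hp : p ∈ Set.Ioo (0:ℝ) 1) (ha : a ∈ Set.Ioo (0:ℝ) 1)
    (hb : b ∈ Set.Ioo (0:ℝ) 1) (hpa : p < a) (hab : a ≤ b) :
    klBer p a / (a - p) ≤ klBer p b / (b - p) := by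
  have := (klBer_convexOn hp).secant_mono hp ha hb (ne_of_gt hpa)
    (ne_of_gt (lt_of_lt_of_le hpa hab)) hab
  rwa [klBer_self hp, sub_zero, sub_zero] at this

lemma sum_telescope_Icc (g : ℕ → ℝ) (K : ℕ) (hK : 1 ≤ K) :
    ∑ k ∈ Finset.Icc 2 K, (g k - g (k - 1)) = g K - g 1 := by
  induction K, hK using Nat.le_induction with
  | base => simp
  | succ n hn ih =>
    rw [Finset.sum_Icc_succ_top (by omega), ih]
    simp


/-- KL-UCB peeling lemma, Lemma 2 of the paper: for
`p_1 ≥ p_2 ≥ … ≥ p_K > p` in `(0,1)` and `Δ_k = p_k − p`,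
`Δ_1 / kl(p, p_1) + Σ_{k=2}^K Δ_k (1/kl(p, p_k) − 1/kl(p, p_{k−1}))
  ≤ Δ_K (1 + log(1/Δ_K)) / kl(p, p_K)`. -/
theorem klucb_peeling (p : ℝ) (hp : p ∈ Set.Ioo (0 : ℝ) 1)
    (K : ℕ) (hK : 1 ≤ K) (q : ℕ → ℝ)
    (hq : ∀ k, 1 ≤ k → k ≤ K → q k ∈ Set.Ioo (0 : ℝ) 1)
    (hmono : ∀ k, 1 ≤ k → k < K → q (k + 1) ≤ q k)
    (hgt : p < q K) :
    (q 1 - p) / klBer p (q 1) +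
        (∑ k ∈ Finset.Icc 2 K, (q k - p) * (1 / klBer p (q k) - 1 / klBer p (q (k - 1)))) ≤
      (q K - p) * (1 + Real.log (1 / (q K - p))) / klBer p (q K) := by
  obtain ⟨hp0, hp1⟩ := hp
  -- chain monotonicity
  have key : ∀ j k : ℕ, 1 ≤ j → j ≤ k → k ≤ K → q k ≤ q j := by
    intro j k hj hjk hkK
    induction k with
    | zero => omega
    | succ n ih =>
      rcases eq_or_lt_of_le hjk with rfl | h
      · exact le_refl _
      · exact le_trans (hmono n (by omega) (by omega)) (ih (by omega) (by omega))
  have hpk : ∀ k, 1 ≤ k → k ≤ K → p < q k := fun k h1 h2 =>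
    lt_of_lt_of_le hgt (key k K h1 h2 le_rfl)
  have hcpos : ∀ k, 1 ≤ k → k ≤ K → 0 < klBer p (q k) := fun k h1 h2 =>
    klBer_pos ⟨hp0, hp1⟩ (hq k h1 h2) (hpk k h1 h2)
  have hqK := hq K hK le_rfl
  have hq1 := hq 1 le_rfl hK
  have hcK : 0 < klBer p (q K) := hcpos K hK le_rfl
  have hc1 : 0 < klBer p (q 1) := hcpos 1 le_rfl hK
  have hdK : 0 < q K - p := by linarith
  have hd1 : 0 < q 1 - p := by linarith [hpk 1 le_rfl hK]
  -- Abel summation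
  have habel : (q 1 - p) / klBer p (q 1) +
      (∑ k ∈ Finset.Icc 2 K, (q k - p) * (1 / klBer p (q k) - 1 / klBer p (q (k - 1)))) =
      (q K - p) / klBer p (q K) +
      ∑ k ∈ Finset.Icc 2 K, ((q (k-1) - p) - (q k - p)) / klBer p (q (k-1)) := by
    have hsplit : ∀ k ∈ Finset.Icc 2 K,
        (q k - p) * (1 / klBer p (q k) - 1 / klBer p (q (k - 1))) =
        ((q k - p) / klBer p (q k) - (q (k-1) - p) / klBer p (q (k-1))) +
        ((q (k-1) - p) - (q k - p)) / klBer p (q (k-1)) := by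
      intro k _
      ring
    rw [Finset.sum_congr rfl hsplit, Finset.sum_add_distrib,
      sum_telescope_Icc (fun k => (q k - p) / klBer p (q k)) K hK]
    ring
  rw [habel]
  -- bound each term of the remaining sum
  have hterm : ∀ k ∈ Finset.Icc 2 K,
      ((q (k-1) - p) - (q k - p)) / klBer p (q (k-1)) ≤
      ((q K - p) / klBer p (q K)) * (Real.log (q (k-1) - p) - Real.log (q k - p)) := by
    intro k hk
    rw [Finset.mem_Icc] at hk
    obtain ⟨hk2, hkK⟩ := hk
    have hk1 : 1 ≤ k - 1 := by omega
    have hk1K : k - 1 ≤ K := by omega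
    have hkm : q k ≤ q (k - 1) := by
      have := hmono (k - 1) hk1 (by omega)
      have hkk : k - 1 + 1 = k := by omega
      rwa [hkk] at this
    have hdk : 0 < q k - p := by linarith [hpk k (by omega) hkK]
    have hdk1 : 0 < q (k-1) - p := by linarith
    have hck1 : 0 < klBer p (q (k-1)) := hcpos (k-1) hk1 hk1K
    -- slope bound : 1 / kl_{k-1} ≤ Δ_K / (Δ_{k-1} kl_K)
    have hsl := klBer_slope_mono ⟨hp0, hp1⟩ hqK (hq (k-1) hk1 hk1K) hgt
      (key (k-1) K hk1 hk1K le_rfl)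
    rw [div_le_div_iff₀ hdK hdk1] at hsl
    have hinv : 1 / klBer p (q (k-1)) ≤ (q K - p) / ((q (k-1) - p) * klBer p (q K)) := by
      rw [div_le_div_iff₀ hck1 (by positivity)]
      nlinarith
    -- log bound : (Δ_{k-1} - Δ_k)/Δ_{k-1} ≤ log Δ_{k-1} - log Δ_k
    have hlog : ((q (k-1) - p) - (q k - p)) / (q (k-1) - p) ≤
        Real.log (q (k-1) - p) - Real.log (q k - p) := by
      have := Real.log_le_sub_one_of_pos (show 0 < (q k - p) / (q (k-1) - p) by positivity)
      rw [Real.log_div (ne_of_gt hdk) (ne_of_gt hdk1)] at this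
      have h3 : ((q (k-1) - p) - (q k - p)) / (q (k-1) - p) = 1 - (q k - p) / (q (k-1) - p) := by
        field_simp
      rw [h3]
      linarith [this]
    have hnn : 0 ≤ (q (k-1) - p) - (q k - p) := by linarith
    calc ((q (k-1) - p) - (q k - p)) / klBer p (q (k-1))
        = ((q (k-1) - p) - (q k - p)) * (1 / klBer p (q (k-1))) := by ring
      _ ≤ ((q (k-1) - p) - (q k - p)) * ((q K - p) / ((q (k-1) - p) * klBer p (q K))) :=
          mul_le_mul_of_nonneg_left hinv hnn
      _ = ((q K - p) / klBer p (q K)) * (((q (k-1) - p) - (q k - p)) / (q (k-1) - p)) := by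
          field_simp
      _ ≤ ((q K - p) / klBer p (q K)) * (Real.log (q (k-1) - p) - Real.log (q k - p)) := by
          apply mul_le_mul_of_nonneg_left hlog (by positivity)
  have hsum := Finset.sum_le_sum hterm
  have htel : ∑ k ∈ Finset.Icc 2 K,
      ((q K - p) / klBer p (q K)) * (Real.log (q (k-1) - p) - Real.log (q k - p)) =
      ((q K - p) / klBer p (q K)) * (Real.log (q 1 - p) - Real.log (q K - p)) := by
    rw [← Finset.mul_sum]
    congr 1
    have := sum_telescope_Icc (fun k => Real.log (q k - p)) K hK
    have h2 : ∑ k ∈ Finset.Icc 2 K, (Real.log (q (k-1) - p) - Real.log (q k - p)) =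
        -∑ k ∈ Finset.Icc 2 K, (Real.log (q k - p) - Real.log (q (k-1) - p)) := by
      rw [← Finset.sum_neg_distrib]
      apply Finset.sum_congr rfl
      intro x _
      ring
    rw [h2, this]
    ring
  have hlog1 : Real.log (q 1 - p) ≤ 0 := by
    apply Real.log_nonpos (by linarith) (by linarith [hq1.2])
  calc (q K - p) / klBer p (q K) +
      ∑ k ∈ Finset.Icc 2 K, ((q (k-1) - p) - (q k - p)) / klBer p (q (k-1))
      ≤ (q K - p) / klBer p (q K) +
        ((q K - p) / klBer p (q K)) * (Real.log (q 1 - p) - Real.log (q K - p)) := by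
        rw [← htel]; linarith [hsum]
    _ ≤ (q K - p) / klBer p (q K) + ((q K - p) / klBer p (q K)) * (-Real.log (q K - p)) := by
        have h0 : 0 ≤ (q K - p) / klBer p (q K) := by positivity
        have h1 := mul_le_mul_of_nonneg_left hlog1 h0
        rw [mul_zero] at h1
        nlinarith [h1]
    _ = (q K - p) * (1 + Real.log (1 / (q K - p))) / klBer p (q K) := by
        rw [one_div, Real.log_inv]
        ring
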